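/- Define polynomials F_i ∈ ℚ[Y] recursively by F_0(Y) = Y − 1 and F_{i+1}(Y) = (Y² − Y) · Y · F_i′(Y) (i.e., F_{i+1} = (Y² − Y)∇_Y F_i with ∇_Y := Y d/dY). Then for every i ≥ 0, substituting the power series y(x) := (1 − w(x))^{-1} into F_i yields φ_i(x); that is, F_i(y(x)) = Σ_{m≥1} (m^{m+i}/m!) x^m in ℚ[[x]]. -/

import Mathlib

open PowerSeries Finset

/-- The rooted tree series `w(x) = Σ_{m≥1} (m^{m-1}/m!) x^m ∈ ℚ⟦x⟧`. -/
noncomputable def rootedTree : ℚ⟦X⟧ :=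
  PowerSeries.mk fun m => if m = 0 then 0 else (m : ℚ) ^ (m - 1) / m.factorial

/-- The series `φ_i(x) = Σ_{m≥1} (m^{m+i}/m!) x^m ∈ ℚ⟦x⟧`. -/
noncomputable def phi (i : ℕ) : ℚ⟦X⟧ :=
  PowerSeries.mk fun m => if m = 0 then 0 else (m : ℚ) ^ (m + i) / m.factorial

/-- The series `y(x) = (1 − w(x))⁻¹ ∈ ℚ⟦x⟧`. -/
noncomputable def ySeries : ℚ⟦X⟧ := (1 - rootedTree)⁻¹

/-- The polynomials `F_0(Y) = Y − 1`, `F_{i+1}(Y) = (Y² − Y)·Y·F_i′(Y)`. -/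
noncomputable def F : ℕ → Polynomial ℚ
  | 0 => Polynomial.X - 1
  | i + 1 =>
      (Polynomial.X ^ 2 - Polynomial.X) * (Polynomial.X * Polynomial.derivative (F i))

/-- Finite differences: `∑ (-1)^k C(m,k) k^j = 0` for `j < m`. -/
lemma findiff : ∀ m : ℕ, ∀ j : ℕ, j < m →
    ∑ k ∈ range (m+1), (-1:ℚ)^k * (m.choose k) * (k:ℚ)^j = 0 := by
  intro m
  induction m using Nat.strong_induction_on with
  | _ m IH =>
    intro j hj
    match j with
    | 0 =>
      simp only [pow_zero, mul_one]
      have h := Int.alternating_sum_range_choose_of_ne (n := m) hj.ne'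
      have h2 := congrArg (fun z : ℤ => (z : ℚ)) h
      push_cast at h2
      convert h2 using 2
    | (i+1) =>
      obtain ⟨n, rfl⟩ : ∃ n, m = n + 1 := ⟨m - 1, by omega⟩
      have hsum : ∑ k ∈ range (n+2), (-1:ℚ)^k * ((n+1).choose k) * (k:ℚ)^(i+1)
          = ∑ k ∈ range (n+1), (-1:ℚ)^(k+1) * ((n+1).choose (k+1)) * ((k+1):ℚ)^(i+1) := by
        rw [Finset.sum_range_succ'] ; simp
      rw [hsum]
      have hterm : ∀ k ∈ range (n+1), (-1:ℚ)^(k+1) * ((n+1).choose (k+1)) * ((k+1):ℚ)^(i+1)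
          = -((n:ℚ)+1) * ∑ t ∈ range (i+1), (i.choose t) * ((-1:ℚ)^k * (n.choose k) * (k:ℚ)^t) := by
        intro k hk
        have hch : ((n+1).choose (k+1) : ℚ) * ((k:ℚ)+1) = ((n:ℚ)+1) * (n.choose k) := by
          have h1 := Nat.add_one_mul_choose_eq n k
          have h2 : (n+1).choose (k+1) * (k+1) = (n+1) * n.choose k := by simpa using h1.symm
          have h3 := congrArg (fun z : ℕ => (z : ℚ)) h2
          push_cast at h3
          linarith [h3]
        have hbin : ((k:ℚ)+1)^i = ∑ t ∈ range (i+1), (i.choose t) * (k:ℚ)^t := by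
          rw [add_pow]
          simp only [one_pow, mul_one]
          apply Finset.sum_congr rfl
          intro t ht
          ring
        calc (-1:ℚ)^(k+1) * ((n+1).choose (k+1)) * ((k+1):ℚ)^(i+1)
            = ((-1:ℚ)^(k+1) * (((n+1).choose (k+1) : ℚ) * ((k:ℚ)+1))) * ((k:ℚ)+1)^i := by
              push_cast; ring
          _ = ((-1:ℚ)^(k+1) * (((n:ℚ)+1) * (n.choose k))) * ∑ t ∈ range (i+1), (i.choose t) * (k:ℚ)^t := by
              rw [hch, hbin]
          _ = ∑ t ∈ range (i+1), -((n:ℚ)+1) * ((i.choose t) * ((-1:ℚ)^k * (n.choose k) * (k:ℚ)^t)) := by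
              rw [Finset.mul_sum]
              apply Finset.sum_congr rfl
              intro t ht
              ring
          _ = -((n:ℚ)+1) * ∑ t ∈ range (i+1), (i.choose t) * ((-1:ℚ)^k * (n.choose k) * (k:ℚ)^t) := by
              rw [← Finset.mul_sum]
      rw [Finset.sum_congr rfl hterm, ← Finset.mul_sum, Finset.sum_comm]
      have hzero : ∀ t ∈ range (i+1), ∑ k ∈ range (n+1), (i.choose t : ℚ) * ((-1:ℚ)^k * (n.choose k) * (k:ℚ)^t) = 0 := by
        intro t ht
        rw [← Finset.mul_sum, IH n (by omega) t (by simp only [Finset.mem_range] at ht; omega), mul_zero]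
      rw [Finset.sum_congr rfl hzero, Finset.sum_const, smul_zero, mul_zero]

lemma neg_one_pow_helper {a b c : ℕ} (h : a + b = c) : (-1:ℚ)^a = (-1)^c * (-1)^b := by
  calc (-1:ℚ)^a = (-1)^a * (-1)^(b+b) := by
        rw [Even.neg_one_pow ⟨b, rfl⟩, mul_one]
    _ = ((-1)^a * (-1)^b) * (-1)^b := by rw [pow_add]; ring
    _ = (-1)^(a+b) * (-1)^b := by rw [pow_add]
    _ = (-1)^c * (-1)^b := by rw [h]

lemma choose_helper (N j : ℕ) : ((N+1).choose j) * (N+1-j) = (N+1) * (N.choose j) := by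
  rw [← Nat.choose_succ_right_eq, ← Nat.add_one_mul_choose_eq]

lemma abel : ∀ m : ℕ, 1 ≤ m → ∀ c : ℚ,
    (∑ k ∈ range m, Polynomial.C ((m.choose (k+1) : ℚ) * ((k:ℚ)+1)^k) *
      (Polynomial.X + Polynomial.C (c + ((m-1-k : ℕ) : ℚ)))^(m-1-k))
    = Polynomial.C (m:ℚ) * (Polynomial.X + Polynomial.C (c + m))^(m-1) := by
  intro m
  induction m using Nat.strong_induction_on with
  | _ m IH =>
    intro hm c
    match m, hm with
    | 1, _ => simp
    | (n+2), _ =>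
      have hn1 : 1 ≤ n + 1 := by omega
      set L : Polynomial ℚ := ∑ k ∈ range (n+2), Polynomial.C (((n+2).choose (k+1) : ℚ) * ((k:ℚ)+1)^k) *
        (Polynomial.X + Polynomial.C (c + ((n+2-1-k : ℕ) : ℚ)))^(n+2-1-k) with hL
      set R : Polynomial ℚ := Polynomial.C ((n+2:ℕ):ℚ) * (Polynomial.X + Polynomial.C (c + (n+2:ℕ)))^(n+2-1) with hR
      have hdL : Polynomial.derivative L = Polynomial.C (((n+2:ℕ)):ℚ) *
          (Polynomial.C ((n+1:ℕ):ℚ) * (Polynomial.X + Polynomial.C ((c+1) + ((n+1:ℕ):ℚ)))^(n+1-1)) := by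
        rw [hL, Polynomial.derivative_sum]
        have hterm : ∀ k ∈ range (n+2),
            Polynomial.derivative (Polynomial.C (((n+2).choose (k+1) : ℚ) * ((k:ℚ)+1)^k) *
              (Polynomial.X + Polynomial.C (c + ((n+2-1-k : ℕ) : ℚ)))^(n+2-1-k))
            = Polynomial.C (((n+2-1-k:ℕ)):ℚ) * (Polynomial.C (((n+2).choose (k+1) : ℚ) * ((k:ℚ)+1)^k) *
              (Polynomial.X + Polynomial.C (c + ((n+2-1-k : ℕ) : ℚ)))^(n+2-1-k-1)) := by
          intro k hk
          rw [Polynomial.derivative_mul, Polynomial.derivative_C, zero_mul, zero_add, Polynomial.derivative_pow]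
          simp only [Polynomial.derivative_add, Polynomial.derivative_X, Polynomial.derivative_C, add_zero, mul_one]
          ring
        rw [Finset.sum_congr rfl hterm]
        rw [Finset.sum_range_succ]
        have hlast : (((n+2-1-(n+1):ℕ)):ℚ) = 0 := by norm_num
        rw [hlast, Polynomial.C_0, zero_mul, add_zero]
        have hIH := IH (n+1) (by omega) hn1 (c+1)
        rw [← hIH, Finset.mul_sum]
        apply Finset.sum_congr rfl
        intro k hk
        simp only [Finset.mem_range] at hk
        have hnat : (n+2-1-k) * ((n+2).choose (k+1)) = (n+2) * ((n+1).choose (k+1)) := by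
          have h := choose_helper (n+1) (k+1)
          have e : n+1+1-(k+1) = n+2-1-k := by omega
          rw [e] at h
          exact (mul_comm _ _).trans h
        have h3 : (((n+2-1-k:ℕ)):ℚ) * (((n+2).choose (k+1)):ℚ) = ((n+2:ℕ):ℚ) * (((n+1).choose (k+1)):ℚ) := by
          exact_mod_cast congrArg (fun z : ℕ => (z:ℚ)) hnat
        have hb : c + (((n+2-1-k:ℕ)):ℚ) = (c+1) + (((n+1-1-k:ℕ)):ℚ) := by
          have e : (n+2-1-k : ℕ) = ((n+1) - 1 - k) + 1 := by omega
          rw [e]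
          push_cast
          ring
        have he : n+2-1-k-1 = n+1-1-k := by omega
        rw [he, hb]
        calc Polynomial.C (((n+2-1-k:ℕ)):ℚ) * (Polynomial.C (((n+2).choose (k+1) : ℚ) * ((k:ℚ)+1)^k) *
              (Polynomial.X + Polynomial.C ((c+1) + (((n+1-1-k:ℕ)):ℚ)))^(n+1-1-k))
            = Polynomial.C ((((n+2-1-k:ℕ)):ℚ) * (((n+2).choose (k+1)):ℚ) * ((k:ℚ)+1)^k) *
              (Polynomial.X + Polynomial.C ((c+1) + (((n+1-1-k:ℕ)):ℚ)))^(n+1-1-k) := by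
              simp only [Polynomial.C_mul]
              ring
          _ = Polynomial.C (((n+2:ℕ):ℚ) * (((n+1).choose (k+1)):ℚ) * ((k:ℚ)+1)^k) *
              (Polynomial.X + Polynomial.C ((c+1) + (((n+1-1-k:ℕ)):ℚ)))^(n+1-1-k) := by
              rw [h3]
          _ = Polynomial.C ((n+2:ℕ):ℚ) * (Polynomial.C ((((n+1).choose (k+1)):ℚ) * ((k:ℚ)+1)^k) *
              (Polynomial.X + Polynomial.C ((c+1) + (((n+1-1-k:ℕ)):ℚ)))^(n+1-1-k)) := by
              simp only [Polynomial.C_mul]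
              ring
      have hdR : Polynomial.derivative R = Polynomial.C (((n+2:ℕ)):ℚ) *
          (Polynomial.C ((n+1:ℕ):ℚ) * (Polynomial.X + Polynomial.C ((c+1) + ((n+1:ℕ):ℚ)))^(n+1-1)) := by
        rw [hR, Polynomial.derivative_mul, Polynomial.derivative_C, zero_mul, zero_add, Polynomial.derivative_pow]
        simp only [Polynomial.derivative_add, Polynomial.derivative_X, Polynomial.derivative_C, add_zero, mul_one]
        have e1 : (c + 1) + ((n+1:ℕ):ℚ) = c + ((n+2:ℕ):ℚ) := by push_cast; ring
        have e2 : (n+2-1 : ℕ) = n + 1 := by omega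
        rw [e1, e2]
      have hconst : L - R = Polynomial.C ((L-R).coeff 0) := by
        apply Polynomial.eq_C_of_derivative_eq_zero
        rw [Polynomial.derivative_sub, hdL, hdR, sub_self]
      set x₀ : ℚ := -(c + ((n+2:ℕ):ℚ)) with hx₀
      have hevalL : Polynomial.eval x₀ L = 0 := by
        rw [hL, Polynomial.eval_finset_sum]
        have hterm : ∀ k ∈ range (n+2), Polynomial.eval x₀
            (Polynomial.C (((n+2).choose (k+1) : ℚ) * ((k:ℚ)+1)^k) *
              (Polynomial.X + Polynomial.C (c + ((n+2-1-k : ℕ) : ℚ)))^(n+2-1-k))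
            = (-1:ℚ)^(n+2) * ((-1)^(k+1) * ((n+2).choose (k+1)) * ((k:ℚ)+1)^(n+2-1)) := by
          intro k hk
          simp only [Finset.mem_range] at hk
          simp only [Polynomial.eval_mul, Polynomial.eval_C, Polynomial.eval_pow,
            Polynomial.eval_add, Polynomial.eval_X]
          have e1 : x₀ + (c + ((n+2-1-k:ℕ):ℚ)) = -((k:ℚ)+1) := by
            have e : (n+2-1-k : ℕ) = (n+2) - (k+1) := by omega
            rw [e, hx₀]
            have hcast : (((n+2) - (k+1) : ℕ) : ℚ) = ((n+2:ℕ):ℚ) - ((k:ℚ)+1) := by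
              rw [Nat.cast_sub (by omega)]
              push_cast
              ring
            rw [hcast]
            ring
          rw [e1, neg_pow]
          have hkk : k + (n+2-1-k) = n+2-1 := by omega
          have e2 : ((k:ℚ)+1)^k * ((k:ℚ)+1)^(n+2-1-k) = ((k:ℚ)+1)^(n+2-1) := by
            rw [← pow_add, hkk]
          have e3 : (-1:ℚ)^(n+2-1-k) = (-1)^(n+2) * (-1)^(k+1) := by
            apply neg_one_pow_helper
            omega
          calc ((n+2).choose (k+1):ℚ) * ((k:ℚ)+1)^k * ((-1:ℚ)^(n+2-1-k) * ((k:ℚ)+1)^(n+2-1-k))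
              = ((n+2).choose (k+1):ℚ) * ((-1:ℚ)^(n+2-1-k)) * (((k:ℚ)+1)^k * ((k:ℚ)+1)^(n+2-1-k)) := by
                ring
            _ = ((n+2).choose (k+1):ℚ) * ((-1:ℚ)^(n+2-1-k)) * ((k:ℚ)+1)^(n+2-1) := by rw [e2]
            _ = (-1:ℚ)^(n+2) * ((-1)^(k+1) * ((n+2).choose (k+1)) * ((k:ℚ)+1)^(n+2-1)) := by
                rw [e3]; ring
        rw [Finset.sum_congr rfl hterm, ← Finset.mul_sum]
        have hfd := findiff (n+2) (n+2-1) (by omega)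
        have hshift : ∑ k ∈ range (n+2), (-1:ℚ)^(k+1) * ((n+2).choose (k+1)) * ((k:ℚ)+1)^(n+2-1)
            = ∑ k ∈ range (n+2+1), (-1:ℚ)^k * ((n+2).choose k) * (k:ℚ)^(n+2-1) := by
          conv_rhs => rw [Finset.sum_range_succ']
          have hz0 : ((-1:ℚ))^0 * (((n+2).choose 0 : ℕ) : ℚ) * ((0:ℕ):ℚ)^(n+2-1) = 0 := by
            rw [Nat.cast_zero, zero_pow (by omega)]
            ring
          rw [hz0, add_zero]
          apply Finset.sum_congr rfl
          intro k hk
          push_cast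
          ring
        rw [hshift, hfd, mul_zero]
      have hevalR : Polynomial.eval x₀ R = 0 := by
        rw [hR]
        simp only [Polynomial.eval_mul, Polynomial.eval_C, Polynomial.eval_pow,
          Polynomial.eval_add, Polynomial.eval_X]
        rw [hx₀]
        have e : -(c + ((n+2:ℕ):ℚ)) + (c + ((n+2:ℕ):ℚ)) = 0 := by ring
        rw [e, zero_pow (by omega)]
        ring
      have hcz : (L - R).coeff 0 = 0 := by
        have h := congrArg (Polynomial.eval x₀) hconst
        rw [Polynomial.eval_sub, hevalL, hevalR, Polynomial.eval_C] at h
        simpa using h.symm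
      have hLR : L - R = 0 := by rw [hconst, hcz, Polynomial.C_0]
      exact sub_eq_zero.mp hLR

/-- The key numeric identity: `∑_{k=1}^{m} C(m,k) k^{k-1} (m-k)^{m-k} = m^m`. -/
lemma abelEval (m : ℕ) (hm : 1 ≤ m) :
    ∑ k ∈ range m, (m.choose (k+1) : ℚ) * ((k:ℚ)+1)^k * (((m-1-k:ℕ)):ℚ)^(m-1-k)
      = (m:ℚ)^m := by
  have h := congrArg (Polynomial.eval (0:ℚ)) (abel m hm 0)
  rw [Polynomial.eval_finset_sum] at h
  simp only [Polynomial.eval_mul, Polynomial.eval_C, Polynomial.eval_pow,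
    Polynomial.eval_add, Polynomial.eval_X, zero_add] at h
  rw [h]
  have e : m - 1 + 1 = m := by omega
  rw [← pow_succ', e]

lemma constCoeff_one_sub_rootedTree : constantCoeff (1 - rootedTree) = 1 := by
  simp [rootedTree]

/-- Key convolution identity: `(1 - w) * φ₀ = w`. -/
lemma keyconv : (1 - rootedTree) * phi 0 = rootedTree := by
  ext n
  rw [PowerSeries.coeff_mul, Finset.Nat.sum_antidiagonal_eq_sum_range_succ_mk]
  match n with
  | 0 => simp [rootedTree, phi]
  | (N+1) =>
    rw [Finset.sum_range_succ']
    have hc0 : (PowerSeries.coeff 0) (1 - rootedTree) = 1 := by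
      simp [rootedTree]
    have hcsucc : ∀ k : ℕ, (PowerSeries.coeff (k+1)) (1 - rootedTree)
        = -(((k+1:ℕ):ℚ)^k / (k+1).factorial) := by
      intro k
      simp [rootedTree, PowerSeries.coeff_one]
    have hphi : ∀ j : ℕ, (PowerSeries.coeff j) (phi 0)
        = if j = 0 then 0 else (j:ℚ)^j / j.factorial := by
      intro j
      simp [phi]
    simp only [hc0, hcsucc, hphi, one_mul]
    rw [show N + 1 - 0 = N + 1 from rfl]
    rw [if_neg (Nat.succ_ne_zero N)]
    -- goal : ∑ k in range (N+1), -( (k+1)^k/(k+1)! ) * (if N-k=0 then 0 else (N-k)^(N-k)/(N-k)!)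
    --        + (N+1)^(N+1)/(N+1)! = coeff (N+1) rootedTree
    have hAbel := abelEval (N+1) (by omega)
    -- split last term of abel sum
    rw [Finset.sum_range_succ] at hAbel
    have hlast : ((N+1).choose (N+1) : ℚ) * ((N:ℚ)+1)^N * (((N+1-1-N:ℕ)):ℚ)^(N+1-1-N)
        = ((N:ℚ)+1)^N := by
      have : N+1-1-N = 0 := by omega
      rw [this]
      simp
    rw [hlast] at hAbel
    have hmain : ∑ k ∈ range (N+1),
        -((((k+1:ℕ)):ℚ)^k / (k+1).factorial) *
          (if N+1-(k+1) = 0 then 0 else (((N+1-(k+1):ℕ)):ℚ)^(N+1-(k+1)) / (N+1-(k+1)).factorial)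
        = -(∑ k ∈ range N, ((N+1).choose (k+1) : ℚ) * ((k:ℚ)+1)^k * (((N+1-1-k:ℕ)):ℚ)^(N+1-1-k))
          / (N+1).factorial := by
      rw [Finset.sum_range_succ]
      have hz : N+1-(N+1) = 0 := by omega
      rw [hz, if_pos rfl, mul_zero, add_zero]
      rw [← Finset.sum_neg_distrib, Finset.sum_div]
      apply Finset.sum_congr rfl
      intro k hk
      simp only [Finset.mem_range] at hk
      have h1 : N+1-(k+1) = N - k := by omega
      have h2 : N+1-1-k = N-k := by omega
      rw [h1, h2, if_neg (by omega)]
      have hchoose : ((N+1).choose (k+1) : ℚ) = (N+1).factorial / ((k+1).factorial * (N-k).factorial) := by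
        have e : N+1-(k+1) = N-k := by omega
        have h := Nat.cast_choose ℚ (show k+1 ≤ N+1 by omega)
        rw [e] at h
        exact h
      rw [hchoose]
      have hf1 : ((k+1).factorial : ℚ) ≠ 0 := Nat.cast_ne_zero.mpr (Nat.factorial_ne_zero _)
      have hf2 : ((N-k).factorial : ℚ) ≠ 0 := Nat.cast_ne_zero.mpr (Nat.factorial_ne_zero _)
      have hf3 : ((N+1).factorial : ℚ) ≠ 0 := Nat.cast_ne_zero.mpr (Nat.factorial_ne_zero _)
      field_simp
      push_cast
      ring
    rw [hmain]
    have hAbel' : ∑ k ∈ range N, ((N+1).choose (k+1) : ℚ) * ((k:ℚ)+1)^k * (((N+1-1-k:ℕ)):ℚ)^(N+1-1-k)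
        = ((N+1:ℕ):ℚ)^(N+1) - ((N:ℚ)+1)^N := by
      push_cast at hAbel ⊢
      linarith
    rw [hAbel']
    have hw : (PowerSeries.coeff (N+1)) rootedTree = ((N+1:ℕ):ℚ)^N / (N+1).factorial := by
      simp only [rootedTree, PowerSeries.coeff_mk, if_neg (Nat.succ_ne_zero N), Nat.add_sub_cancel]
    rw [hw]
    have hf3 : ((N+1).factorial : ℚ) ≠ 0 := Nat.cast_ne_zero.mpr (Nat.factorial_ne_zero _)
    push_cast
    field_simp
    ring

lemma hinv : (1 - rootedTree) * ySeries = 1 := by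
  apply PowerSeries.mul_inv_cancel
  rw [constCoeff_one_sub_rootedTree]
  norm_num

lemma base : ySeries = phi 0 + 1 := by
  have h : (phi 0 + 1) * (1 - rootedTree) = 1 := by
    have : (phi 0 + 1) * (1 - rootedTree) = (1 - rootedTree) * phi 0 + (1 - rootedTree) := by ring
    rw [this, keyconv]
    ring
  have hc : constantCoeff (1 - rootedTree) ≠ 0 := by
    rw [constCoeff_one_sub_rootedTree]; norm_num
  exact ((PowerSeries.eq_inv_iff_mul_eq_one hc).mpr h).symm

lemma X_mul_derivative_phi (i : ℕ) : X * ((d⁄dX ℚ) (phi i)) = phi (i+1) := by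
  ext n
  match n with
  | 0 => simp [phi]
  | (n+1) =>
    rw [PowerSeries.coeff_succ_X_mul, PowerSeries.coeff_derivative]
    simp only [phi, PowerSeries.coeff_mk, if_neg (Nat.succ_ne_zero n)]
    have e : n+1+(i+1) = (n+1+i)+1 := by omega
    rw [e, pow_succ]
    push_cast
    ring

lemma X_mul_derivative_rootedTree : X * ((d⁄dX ℚ) rootedTree) = phi 0 := by
  ext n
  match n with
  | 0 => simp [phi]
  | (n+1) =>
    rw [PowerSeries.coeff_succ_X_mul, PowerSeries.coeff_derivative]
    simp only [rootedTree, phi, PowerSeries.coeff_mk, if_neg (Nat.succ_ne_zero n),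
      Nat.add_sub_cancel]
    have e : n+1+0 = n+1 := by omega
    rw [e, pow_succ]
    push_cast
    ring

lemma deriv_y : (d⁄dX ℚ) ySeries = ySeries^2 * ((d⁄dX ℚ) rootedTree) := by
  have h := congrArg (d⁄dX ℚ) hinv
  rw [Derivation.leibniz] at h
  rw [Derivation.map_one_eq_zero] at h
  rw [map_sub] at h
  rw [Derivation.map_one_eq_zero] at h
  simp only [smul_eq_mul] at h
  -- h : (1 - rootedTree) * D ySeries + ySeries * -(D rootedTree) = 0
  have h2 : (1 - rootedTree) * ((d⁄dX ℚ) ySeries) = ySeries * ((d⁄dX ℚ) rootedTree) := by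
    linear_combination h
  calc (d⁄dX ℚ) ySeries = ((1 - rootedTree) * ySeries) * ((d⁄dX ℚ) ySeries) := by
        rw [hinv, one_mul]
    _ = ySeries * ((1 - rootedTree) * ((d⁄dX ℚ) ySeries)) := by ring
    _ = ySeries * (ySeries * ((d⁄dX ℚ) rootedTree)) := by rw [h2]
    _ = ySeries^2 * ((d⁄dX ℚ) rootedTree) := by ring

/-- For every `i ≥ 0`, substituting `y(x)` into `F_i` yields `φ_i(x)`:
`F_i(y(x)) = Σ_{m≥1} (m^{m+i}/m!) x^m` in `ℚ⟦x⟧`. -/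
theorem F_eval_ySeries (i : ℕ) :
    Polynomial.aeval ySeries (F i) = phi i := by
  induction i with
  | zero =>
    show Polynomial.aeval ySeries (Polynomial.X - 1) = phi 0
    rw [map_sub, Polynomial.aeval_X, map_one, base]
    ring
  | succ i ih =>
    have hchain := Derivation.map_aeval (d⁄dX ℚ) (F i) ySeries
    have key : phi (i+1) = Polynomial.aeval ySeries (F (i+1)) := by
      calc phi (i+1) = X * ((d⁄dX ℚ) (phi i)) := (X_mul_derivative_phi i).symm
        _ = X * ((d⁄dX ℚ) (Polynomial.aeval ySeries (F i))) := by rw [ih]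
        _ = X * (Polynomial.aeval ySeries (Polynomial.derivative (F i)) • (d⁄dX ℚ) ySeries) := by
            rw [hchain]
        _ = Polynomial.aeval ySeries (Polynomial.derivative (F i)) *
              (ySeries^2 * (X * ((d⁄dX ℚ) rootedTree))) := by
            rw [smul_eq_mul, deriv_y]; ring
        _ = Polynomial.aeval ySeries (Polynomial.derivative (F i)) * (ySeries^2 * (ySeries - 1)) := by
            rw [X_mul_derivative_rootedTree, base]; ring
        _ = Polynomial.aeval ySeries (F (i+1)) := by
            show _ = Polynomial.aeval ySeries ((Polynomial.X ^ 2 - Polynomial.X) *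
              (Polynomial.X * Polynomial.derivative (F i)))
            rw [map_mul, map_mul, map_sub, map_pow, Polynomial.aeval_X]
            ring
    exact key.symm
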